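/- Let p be a prime, q a power of p, K an algebraically closed field of characteristic p, and r ≥ 1. Let x = (x_1, …, x_r) ∈ K^r be nonzero, let S = {i ∈ {1, …, r} | x_i ≠ 0}, and let s = gcd(S). Then the set of tuples ε = (ε_1, …, ε_r) with ε_i ∈ μ_{q^i−1}(K) for each i, such that there exists c ∈ K^× with ε_i·x_i = c·x_i for all i = 1, …, r, has cardinality (∏_{i ∈ {1,…,r} \ S} (q^i − 1)) · (q^s − 1). -/

import Mathlib

private lemma aux_dvd_pow_gcd_sub_one {d q m n : ℕ} (hq : 1 ≤ q)
    (hm : d ∣ q ^ m - 1) (hn : d ∣ q ^ n - 1) : d ∣ q ^ Nat.gcd m n - 1 := by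
  rcases Nat.eq_zero_or_pos d with rfl | hd
  · rw [Nat.zero_dvd] at hm hn ⊢
    rcases m with _ | m
    · simpa using hn
    · have hm' : q ^ (m + 1) = 1 :=
        le_antisymm (Nat.sub_eq_zero_iff_le.mp hm) (Nat.one_le_pow _ _ hq)
      have hq1 : q = 1 := ((pow_eq_one_iff).mp hm').resolve_right (Nat.succ_ne_zero m)
      simp [hq1]
  · have h1 : ∀ t : ℕ, d ∣ q ^ t - 1 → (q : ZMod d) ^ t = 1 := by
      intro t ht
      have := (ZMod.natCast_eq_zero_iff _ _).mpr ht
      have hle : 1 ≤ q ^ t := Nat.one_le_pow _ _ hq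
      rw [Nat.cast_sub hle] at this
      push_cast at this
      linear_combination this
    have h2 : (q : ZMod d) ^ Nat.gcd m n = 1 := pow_gcd_eq_one.mpr ⟨h1 m hm, h1 n hn⟩
    rw [← ZMod.natCast_eq_zero_iff, Nat.cast_sub (Nat.one_le_pow _ _ hq)]
    push_cast
    rw [h2]
    ring

private lemma aux_pow_pow_gcd_eq_one {G : Type*} [Monoid G] {q m n : ℕ} (hq : 1 ≤ q)
    {ζ : G} (hm : ζ ^ (q ^ m - 1) = 1) (hn : ζ ^ (q ^ n - 1) = 1) :
    ζ ^ (q ^ Nat.gcd m n - 1) = 1 := by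
  have hd : Nat.gcd (q ^ m - 1) (q ^ n - 1) ∣ q ^ Nat.gcd m n - 1 :=
    aux_dvd_pow_gcd_sub_one hq (Nat.gcd_dvd_left _ _) (Nat.gcd_dvd_right _ _)
  obtain ⟨t, ht⟩ := hd
  rw [ht, pow_mul, pow_gcd_eq_one.mpr ⟨hm, hn⟩, one_pow]

private lemma aux_pow_finset_gcd_eq_one {G : Type*} [Monoid G] {ι : Type*} [DecidableEq ι]
    {q : ℕ} (hq : 1 ≤ q) (S : Finset ι) (f : ι → ℕ) {ζ : G}
    (h : ∀ i ∈ S, ζ ^ (q ^ f i - 1) = 1) : ζ ^ (q ^ S.gcd f - 1) = 1 := by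
  induction S using Finset.induction_on with
  | empty => simp
  | insert a s hnotmem ih =>
    rw [Finset.gcd_insert]
    have h1 : ζ ^ (q ^ f a - 1) = 1 := h a (Finset.mem_insert_self a s)
    have h2 : ζ ^ (q ^ s.gcd f - 1) = 1 := ih fun i hi => h i (Finset.mem_insert_of_mem hi)
    exact aux_pow_pow_gcd_eq_one hq h1 h2

open scoped Classical in
/-- (1.6) of the paper: the stabilizer computation. For a nonzero `x ∈ K^r`, with
`S = {i | x_i ≠ 0}` and `s = gcd S` (indices running from 1 to r), the set of tuples
`ε` with `ε_i` a `(q^i - 1)`-th root of unity acting on `x` by a global scalar has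
cardinality `(∏_{i ∉ S} (q^i - 1)) · (q^s - 1)`. -/
theorem stmt_3 (p : ℕ) (hp : p.Prime) (q : ℕ) (hq : ∃ k : ℕ, 0 < k ∧ q = p ^ k)
    (K : Type*) [Field K] [IsAlgClosed K] [CharP K p]
    (r : ℕ) (hr : 1 ≤ r) (x : Fin r → K) (hx : x ≠ 0) :
    Nat.card {ε : Fin r → Kˣ //
        (∀ i : Fin r, ε i ∈ rootsOfUnity (q ^ ((i : ℕ) + 1) - 1) K) ∧
        ∃ c : Kˣ, ∀ i : Fin r, (ε i : K) * x i = (c : K) * x i} =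
      (∏ i ∈ Finset.univ.filter (fun i : Fin r => x i = 0), (q ^ ((i : ℕ) + 1) - 1)) *
        (q ^ ((Finset.univ.filter (fun i : Fin r => x i ≠ 0)).gcd
            (fun i => (i : ℕ) + 1)) - 1) := by
  classical
  obtain ⟨k, hk, hqpk⟩ := hq
  have hq2 : 2 ≤ q := by
    calc 2 ≤ p := hp.two_le
    _ ≤ p ^ k := Nat.le_self_pow hk.ne' p
    _ = q := hqpk.symm
  have hq1 : 1 ≤ q := le_trans one_le_two hq2
  have hpq : p ∣ q := hqpk ▸ dvd_pow_self p hk.ne'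
  set S : Finset (Fin r) := Finset.univ.filter (fun i : Fin r => x i ≠ 0) with hSdef
  set s : ℕ := S.gcd (fun i => (i : ℕ) + 1) with hsdef
  obtain ⟨i0, hi0⟩ : ∃ i, x i ≠ 0 := Function.ne_iff.mp hx
  have hi0S : i0 ∈ S := by simp [hSdef, hi0]
  have hs0 : s ≠ 0 := by
    intro h
    have := Finset.gcd_eq_zero_iff.mp (hsdef ▸ h) i0 hi0S
    simp at this
  -- cardinality of roots of unity
  have cardRU : ∀ m : ℕ, m ≠ 0 → Nat.card (rootsOfUnity (q ^ m - 1) K) = q ^ m - 1 := by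
    intro m hm
    have h2 : 2 ≤ q ^ m := le_trans hq2 (Nat.le_self_pow hm q)
    have h1 : q ^ m - 1 ≠ 0 := by omega
    haveI : NeZero (q ^ m - 1) := ⟨h1⟩
    have hnd : ¬ p ∣ q ^ m - 1 := by
      intro hdvd
      have hqm : p ∣ q ^ m := dvd_pow (hpq) hm
      have : p ∣ q ^ m - (q ^ m - 1) := Nat.dvd_sub hqm hdvd
      rw [Nat.sub_sub_self (by omega)] at this
      exact hp.one_lt.ne' (Nat.dvd_one.mp this)
    haveI : NeZero ((q ^ m - 1 : ℕ) : K) :=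
      ⟨by rw [Ne, CharP.cast_eq_zero_iff K p]; exact hnd⟩
    exact HasEnoughRootsOfUnity.natCard_rootsOfUnity K _
  -- the key equivalence
  have hgcd_dvd : ∀ i ∈ S, s ∣ (i : ℕ) + 1 := fun i hi => Finset.gcd_dvd hi
  have hdvd_pow : ∀ i : Fin r, i ∈ S → (q ^ s - 1 ∣ q ^ ((i : ℕ) + 1) - 1) := by
    intro i hi
    obtain ⟨t, ht⟩ := hgcd_dvd i hi
    rw [ht, pow_mul]
    simpa using Nat.sub_dvd_pow_sub_pow (q ^ s) 1 t
  let T := (∀ i : {i : Fin r // x i = 0}, rootsOfUnity (q ^ (((i : Fin r) : ℕ) + 1) - 1) K) ×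
      rootsOfUnity (q ^ s - 1) K
  have key : ∀ ε : {ε : Fin r → Kˣ //
        (∀ i : Fin r, ε i ∈ rootsOfUnity (q ^ ((i : ℕ) + 1) - 1) K) ∧
        ∃ c : Kˣ, ∀ i : Fin r, (ε i : K) * x i = (c : K) * x i},
      ∀ i : Fin r, x i ≠ 0 → ε.1 i = ε.1 i0 := by
    rintro ⟨ε, hmem, c, hc⟩ i hi
    have h1 : (ε i : K) = c := mul_right_cancel₀ hi (hc i)
    have h2 : (ε i0 : K) = c := mul_right_cancel₀ hi0 (hc i0)
    exact Units.ext (h1.trans h2.symm)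
  have e : {ε : Fin r → Kˣ //
        (∀ i : Fin r, ε i ∈ rootsOfUnity (q ^ ((i : ℕ) + 1) - 1) K) ∧
        ∃ c : Kˣ, ∀ i : Fin r, (ε i : K) * x i = (c : K) * x i} ≃ T := by
    refine ⟨fun ε => ⟨fun i => ⟨ε.1 i, ε.2.1 i⟩, ⟨ε.1 i0, ?_⟩⟩,
      fun y => ⟨fun i => if h : x i = 0 then (y.1 ⟨i, h⟩ : Kˣ) else (y.2 : Kˣ), ?_, ?_⟩, ?_, ?_⟩
    · -- ε.1 i0 ∈ rootsOfUnity (q ^ s - 1) K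
      rw [mem_rootsOfUnity]
      refine aux_pow_finset_gcd_eq_one hq1 S (fun i => (i : ℕ) + 1) ?_
      intro i hi
      have hxi : x i ≠ 0 := by simpa [hSdef] using hi
      rw [← key ε i hxi]
      exact (mem_rootsOfUnity _ _).mp (ε.2.1 i)
    · -- membership
      intro i
      by_cases h : x i = 0
      · simpa [h] using (y.1 ⟨i, h⟩).2
      · have hiS : i ∈ S := by simp [hSdef, h]
        obtain ⟨t, ht⟩ := hdvd_pow i hiS
        rw [mem_rootsOfUnity]
        simp only [h, dif_neg, not_false_iff]
        rw [ht, pow_mul, (mem_rootsOfUnity _ _).mp y.2.2, one_pow]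
    · -- existence of c
      refine ⟨(y.2 : Kˣ), fun i => ?_⟩
      by_cases h : x i = 0
      · simp [h]
      · simp [h]
    · -- left inverse
      rintro ⟨ε, hmem, hc⟩
      ext i
      simp only
      by_cases h : x i = 0
      · simp [h]
      · simp only [h, dif_neg, not_false_iff]
        exact congrArg Units.val (key ⟨ε, hmem, hc⟩ i h).symm
    · -- right inverse
      rintro ⟨η, c⟩
      refine Prod.ext ?_ ?_
      · funext i
        ext
        simp [i.2]
      · ext
        simp [hi0]
  rw [Nat.card_congr e]
  have : Nat.card T = (∏ i : {i : Fin r // x i = 0},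
      Nat.card (rootsOfUnity (q ^ (((i : Fin r) : ℕ) + 1) - 1) K)) *
      Nat.card (rootsOfUnity (q ^ s - 1) K) := by
    rw [Nat.card_prod, Nat.card_pi]
  rw [this, cardRU s hs0]
  congr 1
  rw [Finset.prod_subtype (Finset.univ.filter (fun i : Fin r => x i = 0))
    (p := fun i : Fin r => x i = 0) (by simp) (fun i => q ^ ((i : ℕ) + 1) - 1)]
  exact Finset.prod_congr rfl fun i _ => cardRU _ (Nat.succ_ne_zero _)
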